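/- Let C be a class of simplicial complexes that is closed under passing to induced subcomplexes. Suppose that every complex K in C whose number of vertices is less than 3·(dim K + 1) satisfies the Taylor upper bound. Then every complex in C satisfies the Taylor upper bound. -/

import Mathlib

open Finset

/-- A simplicial complex on a finite vertex set: a collection of finite subsets
(faces) of the vertex set, closed under inclusion, containing every singleton. -/
structure SC (α : Type*) [DecidableEq α] where
  verts : Finset α
  faces : Finset (Finset α)
  subset_verts : ∀ F ∈ faces, F ⊆ verts
  down_closed : ∀ F ∈ faces, ∀ G, G ⊆ F → G ∈ faces
  singleton_mem : ∀ v ∈ verts, {v} ∈ faces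

namespace SC

variable {α : Type*} [DecidableEq α]

/-- `dimP1 K = dim K + 1`: the maximal number of vertices of a face. -/
def dimP1 (K : SC α) : ℕ := K.faces.sup Finset.card

/-- The number of faces with exactly `j` vertices, i.e. `f_{j-1}(K)`. -/
def fCard (K : SC α) (j : ℕ) : ℕ := (K.faces.filter (fun F => F.card = j)).card

/-- The minimal non-faces of `K`: subsets of the vertex set which are not faces,
all of whose proper subsets are faces. -/
def minNonFaces (K : SC α) : Finset (Finset α) :=
  K.verts.powerset.filter (fun F => F ∉ K.faces ∧ ∀ G ∈ F.powerset, G ≠ F → G ∈ K.faces)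

/-- The `i`-th minimal Taylor shift `m̃_i(K)`: the minimal number of vertices covered by
a set of exactly `i` minimal non-faces of `K`. -/
noncomputable def mT (K : SC α) (i : ℕ) : ℕ :=
  sInf {n | ∃ T ⊆ K.minNonFaces, T.card = i ∧ (T.sup id).card = n}

/-- The `i`-th maximal Taylor shift `M̃_i(K)`: the maximal number of vertices covered by
a set of exactly `i` minimal non-faces of `K`. -/
noncomputable def MT (K : SC α) (i : ℕ) : ℕ :=
  sSup {n | ∃ T ⊆ K.minNonFaces, T.card = i ∧ (T.sup id).card = n}

/-- The conjectured Taylor upper bound `(∏_{i=1}^{n-d} M̃_i(K))/(n-d)!` on `f_{d-1}(K)`. -/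
noncomputable def taylorUBval (K : SC α) : ℚ :=
  (∏ i ∈ Finset.Icc 1 (K.verts.card - K.dimP1), (K.MT i : ℚ)) /
    (Nat.factorial (K.verts.card - K.dimP1))

/-- The conjectured Taylor lower bound `(∏_{i=1}^{n-d} m̃_i(K))/(n-d)!` on `f_{d-1}(K)`. -/
noncomputable def taylorLBval (K : SC α) : ℚ :=
  (∏ i ∈ Finset.Icc 1 (K.verts.card - K.dimP1), (K.mT i : ℚ)) /
    (Nat.factorial (K.verts.card - K.dimP1))

/-- `K` satisfies the Taylor upper bound: `f_{d-1}(K) ≤ (∏_{i=1}^{n-d} M̃_i(K))/(n-d)!`. -/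
def TaylorUB (K : SC α) : Prop := (K.fCard K.dimP1 : ℚ) ≤ K.taylorUBval

/-- `K` satisfies the Taylor lower bound: `f_{d-1}(K) ≥ (∏_{i=1}^{n-d} m̃_i(K))/(n-d)!`. -/
def TaylorLB (K : SC α) : Prop := K.taylorLBval ≤ (K.fCard K.dimP1 : ℚ)

/-- The induced subcomplex `K[W]`: the faces of `K` contained in `W`. -/
def induced (K : SC α) (W : Finset α) : SC α where
  verts := K.verts ∩ W
  faces := K.faces.filter (fun F => F ⊆ W)
  subset_verts := by
    intro F hF
    simp only [mem_filter] at hF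
    exact subset_inter (K.subset_verts F hF.1) hF.2
  down_closed := by
    intro F hF G hG
    simp only [mem_filter] at hF ⊢
    exact ⟨K.down_closed F hF.1 G hG, hG.trans hF.2⟩
  singleton_mem := by
    intro v hv
    simp only [mem_inter] at hv
    simp only [mem_filter, singleton_subset_iff]
    exact ⟨K.singleton_mem v hv.1, hv.2⟩

end SC

section Aux
variable {α : Type*} [DecidableEq α] (K : SC α)
namespace SC

lemma card_le_dimP1 {F : Finset α} (hF : F ∈ K.faces) : F.card ≤ K.dimP1 :=
  Finset.le_sup hF

lemma empty_mem (h : K.faces.Nonempty) : ∅ ∈ K.faces := by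
  obtain ⟨F, hF⟩ := h
  exact K.down_closed F hF ∅ (Finset.empty_subset F)

lemma mem_minNonFaces {G : Finset α} :
    G ∈ K.minNonFaces ↔ G ⊆ K.verts ∧ G ∉ K.faces ∧
      ∀ G' ⊆ G, G' ≠ G → G' ∈ K.faces := by
  simp [minNonFaces, and_assoc]

lemma minNonFaces_subset_verts {G : Finset α} (h : G ∈ K.minNonFaces) : G ⊆ K.verts :=
  ((K.mem_minNonFaces).1 h).1

lemma exists_minNonFace_subset {F : Finset α} (hFV : F ⊆ K.verts) (hF : F ∉ K.faces) :
    ∃ G ∈ K.minNonFaces, G ⊆ F := by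
  induction F using Finset.strongInduction with
  | _ F ih =>
    by_cases h : ∀ G' ⊆ F, G' ≠ F → G' ∈ K.faces
    · exact ⟨F, (K.mem_minNonFaces).2 ⟨hFV, hF, h⟩, Finset.Subset.refl F⟩
    · push_neg at h
      obtain ⟨G', hG'F, hne, hG'⟩ := h
      obtain ⟨G, hG, hsub⟩ := ih G' (lt_of_le_of_ne hG'F hne) (hG'F.trans hFV) hG'
      exact ⟨G, hG, hsub.trans hG'F⟩

lemma two_le_card_minNonFace (hne : K.faces.Nonempty) {G : Finset α}
    (hG : G ∈ K.minNonFaces) : 2 ≤ G.card := by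
  obtain ⟨hGV, hGnf, -⟩ := (K.mem_minNonFaces).1 hG
  by_contra h
  push_neg at h
  interval_cases hc : G.card
  · rw [Finset.card_eq_zero] at hc
    exact hGnf (hc ▸ K.empty_mem hne)
  · rw [Finset.card_eq_one] at hc
    obtain ⟨v, rfl⟩ := hc
    exact hGnf (K.singleton_mem v (hGV (Finset.mem_singleton_self v)))

lemma sup_subset_verts {T : Finset (Finset α)} (hT : T ⊆ K.minNonFaces) :
    T.sup id ⊆ K.verts :=
  Finset.sup_le fun G hG => K.minNonFaces_subset_verts (hT hG)

lemma induced_verts' {W : Finset α} (hW : W ⊆ K.verts) : (K.induced W).verts = W := by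
  simp [induced, Finset.inter_eq_right.2 hW]

lemma mem_induced_faces {W F : Finset α} :
    F ∈ (K.induced W).faces ↔ F ∈ K.faces ∧ F ⊆ W := by
  simp [induced]

lemma mem_induced_minNonFaces {W : Finset α} (hW : W ⊆ K.verts) {G : Finset α} :
    G ∈ (K.induced W).minNonFaces ↔ G ∈ K.minNonFaces ∧ G ⊆ W := by
  constructor
  · intro h
    rw [SC.mem_minNonFaces] at h
    obtain ⟨hGV, hGnf, hmin⟩ := h
    rw [K.induced_verts' hW] at hGV
    refine ⟨(K.mem_minNonFaces).2 ⟨hGV.trans hW, ?_, ?_⟩, hGV⟩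
    · intro hGf
      exact hGnf ((K.mem_induced_faces).2 ⟨hGf, hGV⟩)
    · intro G' hG' hne
      exact ((K.mem_induced_faces).1 (hmin G' hG' hne)).1
  · rintro ⟨h, hGW⟩
    rw [SC.mem_minNonFaces] at h ⊢
    obtain ⟨hGV, hGnf, hmin⟩ := h
    refine ⟨by rw [K.induced_verts' hW]; exact hGW, ?_, ?_⟩
    · intro hGf
      exact hGnf ((K.mem_induced_faces).1 hGf).1
    · intro G' hG' hne
      exact (K.mem_induced_faces).2 ⟨hmin G' hG' hne, hG'.trans hGW⟩

lemma induced_minNonFaces_subset {W : Finset α} (hW : W ⊆ K.verts) :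
    (K.induced W).minNonFaces ⊆ K.minNonFaces := fun G hG =>
  ((K.mem_induced_minNonFaces hW).1 hG).1

lemma MT_le_card (i : ℕ) : K.MT i ≤ K.verts.card := by
  rw [MT]
  rcases Set.eq_empty_or_nonempty
    {n | ∃ T ⊆ K.minNonFaces, T.card = i ∧ (T.sup id).card = n} with h | h
  · rw [h, csSup_empty]
    exact Nat.zero_le _
  · apply csSup_le h
    rintro n ⟨T, hT, -, rfl⟩
    exact Finset.card_le_card (K.sup_subset_verts hT)

lemma bddAbove_MTset (i : ℕ) :
    BddAbove {n | ∃ T ⊆ K.minNonFaces, T.card = i ∧ (T.sup id).card = n} := by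
  refine ⟨K.verts.card, ?_⟩
  rintro n ⟨T, hT, -, rfl⟩
  exact Finset.card_le_card (K.sup_subset_verts hT)

lemma le_MT {i n : ℕ} {T : Finset (Finset α)} (hT : T ⊆ K.minNonFaces)
    (hc : T.card = i) (hn : (T.sup id).card = n) : n ≤ K.MT i :=
  le_csSup (K.bddAbove_MTset i) ⟨T, hT, hc, hn⟩

lemma exists_facet (hd : 1 ≤ K.dimP1) : ∃ F ∈ K.faces, F.card = K.dimP1 := by
  have hne : K.faces.Nonempty := by
    by_contra h
    rw [Finset.not_nonempty_iff_eq_empty] at h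
    rw [dimP1, h] at hd
    simp at hd
  obtain ⟨F, hF, hFc⟩ := Finset.exists_mem_eq_sup K.faces hne Finset.card
  exact ⟨F, hF, hFc.symm⟩

lemma faces_nonempty (hd : 1 ≤ K.dimP1) : K.faces.Nonempty := by
  obtain ⟨F, hF, -⟩ := K.exists_facet hd
  exact ⟨F, hF⟩

/-- For each vertex `v` outside a facet `F`, there is a minimal non-face inside
`insert v F` containing `v`; these are distinct, so there are at least `n - d`
minimal non-faces. -/
lemma card_minNonFaces_ge (hd : 1 ≤ K.dimP1) :
    K.verts.card - K.dimP1 ≤ K.minNonFaces.card := by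
  classical
  obtain ⟨F, hF, hFc⟩ := K.exists_facet hd
  have hFV : F ⊆ K.verts := K.subset_verts F hF
  have key : ∀ v ∈ K.verts \ F, ∃ G ∈ K.minNonFaces, v ∈ G ∧ G ⊆ insert v F := by
    intro v hv
    rw [Finset.mem_sdiff] at hv
    have hnf : insert v F ∉ K.faces := by
      intro h
      have := K.card_le_dimP1 h
      rw [Finset.card_insert_of_notMem hv.2, hFc] at this
      omega
    obtain ⟨G, hG, hGsub⟩ := K.exists_minNonFace_subset
      (Finset.insert_subset hv.1 hFV) hnf
    refine ⟨G, hG, ?_, hGsub⟩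
    by_contra hvG
    have hGF : G ⊆ F := by
      intro x hx
      rcases Finset.mem_insert.1 (hGsub hx) with rfl | h
      · exact absurd hx hvG
      · exact h
    exact ((K.mem_minNonFaces).1 hG).2.1 (K.down_closed F hF G hGF)
  have key' : ∀ v : α, ∃ G : Finset α, v ∈ K.verts \ F →
      G ∈ K.minNonFaces ∧ v ∈ G ∧ G ⊆ insert v F := by
    intro v
    by_cases hv : v ∈ K.verts \ F
    · obtain ⟨G, h1, h2, h3⟩ := key v hv
      exact ⟨G, fun _ => ⟨h1, h2, h3⟩⟩
    · exact ⟨∅, fun h => absurd h hv⟩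
  choose g hg using key'
  have hcard : (K.verts \ F).card ≤ K.minNonFaces.card := by
    apply Finset.card_le_card_of_injOn g (fun v hv => (hg v hv).1)
    intro v hv w hw hvw
    have h1 : v ∈ g v := (hg v (Finset.mem_coe.1 hv)).2.1
    have h2 : g v ⊆ insert w F := hvw ▸ (hg w (Finset.mem_coe.1 hw)).2.2
    rcases Finset.mem_insert.1 (h2 h1) with h | h
    · exact h
    · exact absurd h (Finset.mem_sdiff.1 (Finset.mem_coe.1 hv)).2
  rwa [Finset.card_sdiff_of_subset hFV, hFc] at hcard

/-- Phase 1: a "saturated" partial cover, using at most half as many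
minimal non-faces as covered vertices. -/
lemma exists_saturated :
    ∃ T ⊆ K.minNonFaces, 2 * T.card ≤ (T.sup id).card ∧
      ∀ G ∈ K.minNonFaces, (G \ T.sup id).card ≤ 1 := by
  classical
  set s := K.minNonFaces.powerset.filter (fun T => 2 * T.card ≤ (T.sup id).card) with hs
  have hne : s.Nonempty := ⟨∅, by simp [hs]⟩
  obtain ⟨T, hTs, hmax⟩ := s.exists_max_image (fun T => (T.sup id).card) hne
  rw [hs, Finset.mem_filter, Finset.mem_powerset] at hTs
  refine ⟨T, hTs.1, hTs.2, ?_⟩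
  intro G hG
  by_contra h
  push_neg at h
  have hGT : G ∉ T := by
    intro hGT
    have : G ⊆ T.sup id := Finset.le_sup (f := id) hGT
    rw [Finset.sdiff_eq_empty_iff_subset.2 this] at h
    simp at h
  have hsup : ((insert G T).sup id).card = (G \ T.sup id).card + (T.sup id).card := by
    rw [Finset.sup_insert]
    exact (Finset.card_sdiff_add_card G (T.sup id)).symm
  have hmem : insert G T ∈ s := by
    rw [hs, Finset.mem_filter, Finset.mem_powerset]
    refine ⟨Finset.insert_subset hG hTs.1, ?_⟩
    rw [Finset.card_insert_of_notMem hGT, hsup]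
    omega
  have := hmax _ hmem
  rw [hsup] at this
  omega

/-- Phase 2: extend any partial cover to a full cover, one new vertex at a time. -/
lemma extend_cover (hnc : ∀ v ∈ K.verts, ∃ G ∈ K.minNonFaces, v ∈ G) :
    ∀ (k : ℕ) (T : Finset (Finset α)), T ⊆ K.minNonFaces →
      (K.verts \ T.sup id).card ≤ k →
    ∃ T', T ⊆ T' ∧ T' ⊆ K.minNonFaces ∧ K.verts ⊆ T'.sup id ∧ T'.card ≤ T.card + k := by
  intro k
  induction k with
  | zero =>
    intro T hT hk
    refine ⟨T, Finset.Subset.refl T, hT, ?_, by omega⟩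
    rw [Nat.le_zero, Finset.card_eq_zero, Finset.sdiff_eq_empty_iff_subset] at hk
    exact hk
  | succ k ih =>
    intro T hT hk
    rcases Finset.eq_empty_or_nonempty (K.verts \ T.sup id) with he | ⟨v, hv⟩
    · rw [Finset.sdiff_eq_empty_iff_subset] at he
      exact ⟨T, Finset.Subset.refl T, hT, he, by omega⟩
    · rw [Finset.mem_sdiff] at hv
      obtain ⟨G, hG, hvG⟩ := hnc v hv.1
      have hGT : G ∉ T := fun h => hv.2 (Finset.mem_sup.2 ⟨G, h, hvG⟩)
      have hsub : K.verts \ ((insert G T).sup id) ⊂ K.verts \ T.sup id := by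
        rw [Finset.sup_insert]
        refine ⟨Finset.sdiff_subset_sdiff (Finset.Subset.refl _) le_sup_right, ?_⟩
        intro hcontra
        have : v ∈ K.verts \ (G ⊔ T.sup id) := hcontra (Finset.mem_sdiff.2 hv)
        rw [Finset.mem_sdiff] at this
        exact this.2 (Finset.mem_union.2 (Or.inl hvG))
      have hlt := Finset.card_lt_card hsub
      obtain ⟨T', h1, h2, h3, h4⟩ := ih (insert G T)
        (Finset.insert_subset hG hT) (by omega)
      refine ⟨T', (Finset.subset_insert G T).trans h1, h2, h3, ?_⟩
      rw [Finset.card_insert_of_notMem hGT] at h4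
      omega

/-- The covering lemma: with no cone points and `n ≥ 3d`, there are exactly
`n - d` minimal non-faces covering all vertices. -/
lemma exists_full_cover (hd : 1 ≤ K.dimP1) (h3 : 3 * K.dimP1 ≤ K.verts.card)
    (hnc : ∀ v ∈ K.verts, ∃ G ∈ K.minNonFaces, v ∈ G) :
    ∃ T ⊆ K.minNonFaces, T.card = K.verts.card - K.dimP1 ∧ T.sup id = K.verts := by
  classical
  obtain ⟨T1, hT1, hhalf, hsat⟩ := K.exists_saturated
  set U := T1.sup id with hU
  have hUV : U ⊆ K.verts := K.sup_subset_verts hT1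
  -- the uncovered set is a face, hence small
  have hRface : K.verts \ U ∈ K.faces := by
    by_contra h
    obtain ⟨G, hG, hGsub⟩ := K.exists_minNonFace_subset (Finset.sdiff_subset) h
    have h2 := K.two_le_card_minNonFace (K.faces_nonempty hd) hG
    have : G \ U = G := by
      rw [Finset.sdiff_eq_self_iff_disjoint]
      exact Finset.disjoint_left.2 fun x hx =>
        (Finset.mem_sdiff.1 (hGsub hx)).2
    have := hsat G hG
    rw [‹G \ U = G›] at this
    omega
  have hRcard : (K.verts \ U).card ≤ K.dimP1 := by
    rw [show (K.verts \ U).card = (K.verts \ U).card from rfl]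
    exact K.card_le_dimP1 hRface
  obtain ⟨T2, hT12, hT2, hT2cov, hT2card⟩ :=
    K.extend_cover hnc (K.verts \ U).card T1 hT1 (le_refl _)
  have hUcard : (K.verts \ U).card + U.card = K.verts.card :=
    Finset.card_sdiff_add_card_eq_card hUV
  have hT2le : T2.card ≤ K.verts.card - K.dimP1 := by omega
  -- pad with unused minimal non-faces
  have hpad : K.verts.card - K.dimP1 - T2.card ≤ (K.minNonFaces \ T2).card := by
    have h1 := K.card_minNonFaces_ge hd
    have h2 := Finset.le_card_sdiff T2 K.minNonFaces
    have h3 := Finset.card_le_card hT2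
    omega
  obtain ⟨S, hS, hScard⟩ := Finset.exists_subset_card_eq hpad
  refine ⟨T2 ∪ S, ?_, ?_, ?_⟩
  · exact Finset.union_subset hT2 (hS.trans (Finset.sdiff_subset))
  · rw [Finset.card_union_of_disjoint, hScard]
    · omega
    · exact Finset.disjoint_right.2 fun G hGS => (Finset.mem_sdiff.1 (hS hGS)).2
  · apply Finset.Subset.antisymm
    · exact K.sup_subset_verts (Finset.union_subset hT2 (hS.trans (Finset.sdiff_subset)))
    · intro v hv
      rw [Finset.sup_union]
      exact Finset.mem_union.2 (Or.inl (hT2cov hv))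

lemma MT_induced_le {W : Finset α} (hW : W ⊆ K.verts) (i : ℕ) :
    (K.induced W).MT i ≤ K.MT i := by
  rw [MT]
  rcases Set.eq_empty_or_nonempty
    {n | ∃ T ⊆ (K.induced W).minNonFaces, T.card = i ∧ (T.sup id).card = n} with h | h
  · rw [h, csSup_empty]
    exact Nat.zero_le _
  · apply csSup_le h
    rintro n ⟨T, hT, hc, rfl⟩
    exact K.le_MT (hT.trans (K.induced_minNonFaces_subset hW)) hc rfl

lemma MT_top (hd : 1 ≤ K.dimP1) (h3 : 3 * K.dimP1 ≤ K.verts.card)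
    (hnc : ∀ v ∈ K.verts, ∃ G ∈ K.minNonFaces, v ∈ G) :
    K.MT (K.verts.card - K.dimP1) = K.verts.card := by
  refine le_antisymm (K.MT_le_card _) ?_
  obtain ⟨T, hT, hc, hsup⟩ := K.exists_full_cover hd h3 hnc
  exact K.le_MT hT hc (by rw [hsup])

lemma dimP1_pos_of_verts_nonempty (h : K.verts.Nonempty) : 1 ≤ K.dimP1 := by
  obtain ⟨v, hv⟩ := h
  have := K.card_le_dimP1 (K.singleton_mem v hv)
  simpa using this

lemma dimP1_le_card : K.dimP1 ≤ K.verts.card := by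
  rw [dimP1]
  exact Finset.sup_le fun F hF => Finset.card_le_card (K.subset_verts F hF)

/-- The degenerate case: if `dimP1 = 0` then the Taylor upper bound holds. -/
lemma taylorUB_of_dimP1_eq_zero (hd : K.dimP1 = 0) : TaylorUB K := by
  have hv : K.verts = ∅ := by
    rcases Finset.eq_empty_or_nonempty K.verts with h | h
    · exact h
    · have := K.dimP1_pos_of_verts_nonempty h
      omega
  rw [TaylorUB, taylorUBval, hd, hv]
  simp only [Finset.card_empty, Nat.zero_sub, Finset.Icc_self, Nat.factorial_zero]
  rw [show Finset.Icc 1 0 = ∅ by rfl]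
  simp only [Finset.prod_empty, Nat.cast_one, ne_eq, one_ne_zero, not_false_eq_true, div_self]
  have : K.fCard 0 ≤ 1 := by
    rw [fCard]
    calc (K.faces.filter (fun F => F.card = 0)).card ≤ ({(∅ : Finset α)} : Finset (Finset α)).card := by
          apply Finset.card_le_card
          intro F hF
          rw [Finset.mem_filter, Finset.card_eq_zero] at hF
          simp [hF.2]
      _ = 1 := rfl
  exact_mod_cast this

/-- The cone case: a vertex in no minimal non-face can be removed without
changing the facet count or the Taylor upper bound value. -/
lemma taylorUB_cone {v : α} (hvV : v ∈ K.verts) (hv : ∀ G ∈ K.minNonFaces, v ∉ G)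
    (hd : 1 ≤ K.dimP1)
    (hUB : TaylorUB (K.induced (K.verts.erase v))) : TaylorUB K := by
  classical
  set W := K.verts.erase v with hW
  have hWV : W ⊆ K.verts := Finset.erase_subset v K.verts
  have hcone : ∀ F ∈ K.faces, insert v F ∈ K.faces := by
    intro F hF
    by_cases hvF : v ∈ F
    · rwa [Finset.insert_eq_self.2 hvF]
    by_contra h
    obtain ⟨G, hG, hGsub⟩ := K.exists_minNonFace_subset
      (Finset.insert_subset hvV (K.subset_verts F hF)) h
    have hGF : G ⊆ F := by
      intro x hx
      rcases Finset.mem_insert.1 (hGsub hx) with rfl | hh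
      · exact absurd hx (hv G hG)
      · exact hh
    exact ((K.mem_minNonFaces).1 hG).2.1 (K.down_closed F hF G hGF)
  have htop : ∀ F ∈ K.faces, F.card = K.dimP1 → v ∈ F := by
    intro F hF hFc
    by_contra hvF
    have := K.card_le_dimP1 (hcone F hF)
    rw [Finset.card_insert_of_notMem hvF, hFc] at this
    omega
  have hverts' : (K.induced W).verts = W := K.induced_verts' hWV
  have hcard' : (K.induced W).verts.card = K.verts.card - 1 := by
    rw [hverts', hW, Finset.card_erase_of_mem hvV]
  have hdim' : (K.induced W).dimP1 = K.dimP1 - 1 := by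
    apply le_antisymm
    · rw [dimP1]
      apply Finset.sup_le
      intro F hF
      rw [K.mem_induced_faces] at hF
      have h1 := K.card_le_dimP1 hF.1
      have h2 : F.card ≠ K.dimP1 := by
        intro h
        have := htop F hF.1 h
        exact (Finset.notMem_erase v K.verts) (hF.2 this)
      omega
    · obtain ⟨F, hF, hFc⟩ := K.exists_facet hd
      have hvF := htop F hF hFc
      have : F.erase v ∈ (K.induced W).faces := by
        rw [K.mem_induced_faces]
        exact ⟨K.down_closed F hF _ (Finset.erase_subset v F),
          Finset.erase_subset_erase v (K.subset_verts F hF)⟩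
      have := Finset.le_sup (f := Finset.card) this
      rwa [Finset.card_erase_of_mem hvF, hFc] at this
  have hmnf : (K.induced W).minNonFaces = K.minNonFaces := by
    ext G
    rw [K.mem_induced_minNonFaces hWV]
    constructor
    · exact fun h => h.1
    · intro h
      refine ⟨h, ?_⟩
      intro x hx
      rw [hW, Finset.mem_erase]
      exact ⟨fun heq => hv G h (heq ▸ hx), K.minNonFaces_subset_verts h hx⟩
  have hMT : ∀ i, (K.induced W).MT i = K.MT i := by
    intro i
    rw [MT, MT, hmnf]
  have hfc : (K.induced W).fCard (K.dimP1 - 1) = K.fCard K.dimP1 := by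
    rw [fCard, fCard]
    apply Finset.card_bij (fun F _ => insert v F)
    · intro F hF
      rw [Finset.mem_filter] at hF ⊢
      rw [K.mem_induced_faces] at hF
      obtain ⟨⟨hf1, hf2⟩, hf3⟩ := hF
      have hvF : v ∉ F := fun h => (Finset.notMem_erase v K.verts) (hf2 h)
      refine ⟨hcone F hf1, ?_⟩
      rw [Finset.card_insert_of_notMem hvF, hf3]
      omega
    · intro F1 h1 F2 h2 heq
      rw [Finset.mem_filter, K.mem_induced_faces] at h1 h2
      have hv1 : v ∉ F1 := fun h => (Finset.notMem_erase v K.verts) (h1.1.2 h)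
      have hv2 : v ∉ F2 := fun h => (Finset.notMem_erase v K.verts) (h2.1.2 h)
      have : (insert v F1).erase v = (insert v F2).erase v := by rw [heq]
      rwa [Finset.erase_insert hv1, Finset.erase_insert hv2] at this
    · intro F hF
      rw [Finset.mem_filter] at hF
      have hvF : v ∈ F := htop F hF.1 hF.2
      refine ⟨F.erase v, ?_, ?_⟩
      · rw [Finset.mem_filter, K.mem_induced_faces]
        refine ⟨⟨K.down_closed F hF.1 _ (Finset.erase_subset v F),
          Finset.erase_subset_erase v (K.subset_verts F hF.1)⟩, ?_⟩
        rw [Finset.card_erase_of_mem hvF, hF.2]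
      · rw [Finset.insert_erase hvF]
  have hdn : K.dimP1 ≤ K.verts.card := K.dimP1_le_card
  have hn1 : 1 ≤ K.verts.card := Finset.card_pos.2 ⟨v, hvV⟩
  rw [TaylorUB, taylorUBval] at hUB ⊢
  rw [hcard', hdim', hfc] at hUB
  have harith : K.verts.card - 1 - (K.dimP1 - 1) = K.verts.card - K.dimP1 := by omega
  rw [harith] at hUB
  calc (K.fCard K.dimP1 : ℚ) ≤ _ := hUB
    _ = _ := by
        congr 1
        apply Finset.prod_congr rfl
        intro i _
        rw [hMT]

/-- Double counting: summing over vertices the number of facets containing it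
counts each facet `dimP1` times. -/
lemma sum_facet_degrees :
    ∑ v ∈ K.verts, ((K.faces.filter (fun F => F.card = K.dimP1)).filter
      (fun F => v ∈ F)).card = K.dimP1 * K.fCard K.dimP1 := by
  classical
  set A := K.faces.filter (fun F => F.card = K.dimP1) with hA
  have : ∀ v, ((A.filter (fun F => v ∈ F)).card) = ∑ F ∈ A, if v ∈ F then 1 else 0 := by
    intro v
    rw [Finset.card_filter]
  simp_rw [this]
  rw [Finset.sum_comm]
  have : ∀ F ∈ A, (∑ v ∈ K.verts, if v ∈ F then 1 else 0) = K.dimP1 := by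
    intro F hF
    rw [Finset.mem_filter] at hF
    rw [← Finset.card_filter]
    have : K.verts.filter (fun v => v ∈ F) = F := by
      apply Finset.Subset.antisymm
      · intro x hx
        exact (Finset.mem_filter.1 hx).2
      · intro x hx
        exact Finset.mem_filter.2 ⟨K.subset_verts F hF.1 hx, hx⟩
    rw [this, hF.2]
  rw [Finset.sum_congr rfl this, Finset.sum_const, smul_eq_mul, mul_comm, fCard]

/-- The no-cone case of the induction. -/
lemma taylorUB_nocone (hd : 1 ≤ K.dimP1) (h3 : 3 * K.dimP1 ≤ K.verts.card)
    (hnc : ∀ v ∈ K.verts, ∃ G ∈ K.minNonFaces, v ∈ G)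
    (hUB : ∀ v ∈ K.verts, TaylorUB (K.induced (K.verts.erase v))) : TaylorUB K := by
  classical
  set n := K.verts.card with hn
  set d := K.dimP1 with hdim
  set A := K.faces.filter (fun F => F.card = d) with hA
  set f := K.fCard d with hf
  have hfA : f = A.card := rfl
  have hf1 : 1 ≤ f := by
    obtain ⟨F, hF, hFc⟩ := K.exists_facet hd
    have : F ∈ A := Finset.mem_filter.2 ⟨hF, hFc⟩
    rw [hfA]
    exact Finset.card_pos.2 ⟨F, this⟩
  have hdn : d + 2 ≤ n := by
    have := hd
    omega
  have hVne : K.verts.Nonempty := Finset.card_pos.1 (by omega)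
  -- choose a vertex of minimal facet-degree
  obtain ⟨v, hvV, hvmin⟩ := K.verts.exists_min_image
    (fun v => (A.filter (fun F => v ∈ F)).card) hVne
  set g := (A.filter (fun F => v ∈ F)).card with hg
  have hsum := K.sum_facet_degrees
  rw [← hA, ← hdim, ← hf] at hsum
  have hng : n * g ≤ d * f := by
    calc n * g = ∑ _u ∈ K.verts, g := by rw [Finset.sum_const, smul_eq_mul, hn]
      _ ≤ ∑ u ∈ K.verts, (A.filter (fun F => u ∈ F)).card :=
          Finset.sum_le_sum fun u hu => hvmin u hu
      _ = d * f := hsum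
  have hgf : g < f := by
    by_contra h
    push_neg at h
    have : n * f ≤ n * g := Nat.mul_le_mul_left n h
    have : n * f ≤ d * f := le_trans this hng
    have hdln : d < n := by omega
    nlinarith
  set W := K.verts.erase v with hW
  have hWV : W ⊆ K.verts := Finset.erase_subset v K.verts
  have hverts' : (K.induced W).verts = W := K.induced_verts' hWV
  have hcard' : (K.induced W).verts.card = n - 1 := by
    rw [hverts', hW, Finset.card_erase_of_mem hvV, hn]
  -- there is a facet avoiding v
  have hAv : (A.filter (fun F => v ∉ F)).Nonempty := by
    rw [← Finset.card_pos]
    have := Finset.card_filter_add_card_filter_not (s := A)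
      (p := fun F => v ∈ F)
    omega
  have hdim' : (K.induced W).dimP1 = d := by
    apply le_antisymm
    · apply Finset.sup_le
      intro F hF
      rw [K.mem_induced_faces] at hF
      exact K.card_le_dimP1 hF.1
    · obtain ⟨F, hF⟩ := hAv
      rw [Finset.mem_filter, Finset.mem_filter] at hF
      obtain ⟨⟨hF1, hF2⟩, hF3⟩ := hF
      have : F ∈ (K.induced W).faces := by
        rw [K.mem_induced_faces]
        refine ⟨hF1, Finset.subset_erase.2 ⟨K.subset_verts F hF1, hF3⟩⟩
      have := Finset.le_sup (f := Finset.card) this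
      rwa [hF2] at this
  -- facet count of the subcomplex
  have hfc : (K.induced W).fCard d + g = f := by
    have heq : (K.induced W).faces.filter (fun F => F.card = d) =
        A.filter (fun F => v ∉ F) := by
      ext F
      simp only [Finset.mem_filter, K.mem_induced_faces, hA]
      constructor
      · rintro ⟨⟨h1, h2⟩, h3⟩
        exact ⟨⟨h1, h3⟩, (Finset.subset_erase.1 h2).2⟩
      · rintro ⟨⟨h1, h2⟩, h3⟩
        exact ⟨⟨h1, Finset.subset_erase.2 ⟨K.subset_verts F h1, h3⟩⟩, h2⟩
    rw [fCard, heq, hg, hfA]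
    have := Finset.card_filter_add_card_filter_not (s := A)
      (p := fun F => v ∈ F)
    omega
  -- apply the induction hypothesis to the subcomplex
  have hIH := hUB v hvV
  rw [TaylorUB, taylorUBval, hcard', hdim'] at hIH
  set m := n - 1 - d with hm
  have hmd : n - d = m + 1 := by omega
  -- compare Taylor shifts
  have hprodle : (∏ i ∈ Finset.Icc 1 m, ((K.induced W).MT i : ℚ)) ≤
      ∏ i ∈ Finset.Icc 1 m, (K.MT i : ℚ) := by
    apply Finset.prod_le_prod
    · intro i _
      positivity
    · intro i _
      exact_mod_cast K.MT_induced_le hWV i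
  have hMTtop : K.MT (n - d) = n := K.MT_top hd h3 hnc
  -- final arithmetic
  rw [TaylorUB, taylorUBval, ← hn, ← hdim, ← hf, hmd]
  rw [Finset.prod_Icc_succ_top (Nat.le_add_left 1 m), Nat.factorial_succ]
  have hMTtop' : K.MT (m + 1) = n := by rw [← hmd]; exact hMTtop
  set q := ∏ i ∈ Finset.Icc 1 m, (K.MT i : ℚ) with hq
  set q' := ∏ i ∈ Finset.Icc 1 m, ((K.induced W).MT i : ℚ) with hq'
  have hq'0 : 0 ≤ q' := by positivity
  have hmfac0 : (0:ℚ) < (Nat.factorial m : ℚ) := by positivity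
  have hIH' : ((K.induced W).fCard d : ℚ) * (Nat.factorial m) ≤ q' := by
    rw [← le_div_iff₀ hmfac0]
    exact hIH
  have hf' : ((K.induced W).fCard d : ℚ) = (f : ℚ) - g := by
    have := hfc
    push_cast [← this]
    ring
  have hng' : (n : ℚ) * g ≤ d * f := by exact_mod_cast hng
  have hmd' : ((m : ℚ) + 1) = n - d := by
    have : (m + 1 : ℕ) = n - d := hmd.symm
    have h2 : ((n - d : ℕ) : ℚ) = (n : ℚ) - d := by
      push_cast [Nat.cast_sub (by omega : d ≤ n)]
      ring
    rw [← h2]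
    exact_mod_cast this
  rw [hMTtop', le_div_iff₀ (by positivity)]
  push_cast
  have key : (f : ℚ) * ((m + 1) * Nat.factorial m) ≤ q * n := by
    have step1 : (f : ℚ) * (m + 1) ≤ (n : ℚ) * ((f : ℚ) - g) := by
      rw [hmd']
      nlinarith
    have step2 : (f : ℚ) * ((m + 1) * Nat.factorial m) ≤
        (n : ℚ) * (((f : ℚ) - g) * Nat.factorial m) := by
      calc (f : ℚ) * ((m + 1) * Nat.factorial m)
          = ((f : ℚ) * (m + 1)) * Nat.factorial m := by ring
        _ ≤ ((n : ℚ) * ((f : ℚ) - g)) * Nat.factorial m := by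
            apply mul_le_mul_of_nonneg_right step1 (le_of_lt hmfac0)
        _ = (n : ℚ) * (((f : ℚ) - g) * Nat.factorial m) := by ring
    have step3 : ((f : ℚ) - g) * Nat.factorial m ≤ q' := by
      rw [← hf']
      exact hIH'
    have step4 : (n : ℚ) * (((f : ℚ) - g) * Nat.factorial m) ≤ (n : ℚ) * q' := by
      apply mul_le_mul_of_nonneg_left step3 (by positivity)
    have step5 : (n : ℚ) * q' ≤ (n : ℚ) * q := by
      apply mul_le_mul_of_nonneg_left hprodle (by positivity)
    calc (f : ℚ) * ((m + 1) * Nat.factorial m) ≤ (n : ℚ) * (((f : ℚ) - g) * Nat.factorial m) := step2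
      _ ≤ (n : ℚ) * q' := step4
      _ ≤ (n : ℚ) * q := step5
      _ = q * n := by ring
  exact key

end SC
end Aux

open SC in
/-- If a class of simplicial complexes closed under induced subcomplexes is such that every
member on fewer than `3 (dim + 1)` vertices satisfies the Taylor upper bound, then every
member satisfies the Taylor upper bound. -/
theorem taylorUB_of_small_cases {α : Type*} [DecidableEq α] (C : Set (SC α))
    (hclosed : ∀ K ∈ C, ∀ W ⊆ K.verts, K.induced W ∈ C)
    (hsmall : ∀ K ∈ C, K.verts.card < 3 * K.dimP1 → TaylorUB K) :
    ∀ K ∈ C, TaylorUB K := by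
  suffices H : ∀ n (K : SC α), K ∈ C → K.verts.card = n → TaylorUB K by
    intro K hK
    exact H K.verts.card K hK rfl
  intro n
  induction n using Nat.strong_induction_on with
  | _ n IH =>
    intro K hK hn
    by_cases hd : K.dimP1 = 0
    · exact K.taylorUB_of_dimP1_eq_zero hd
    have hd1 : 1 ≤ K.dimP1 := by omega
    by_cases hsize : K.verts.card < 3 * K.dimP1
    · exact hsmall K hK hsize
    push_neg at hsize
    have hn1 : 1 ≤ K.verts.card := by omega
    have hsub : ∀ v ∈ K.verts, K.induced (K.verts.erase v) ∈ C ∧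
        (K.induced (K.verts.erase v)).verts.card = n - 1 := by
      intro v hvV
      refine ⟨hclosed K hK _ (Finset.erase_subset v K.verts), ?_⟩
      rw [K.induced_verts' (Finset.erase_subset v K.verts),
        Finset.card_erase_of_mem hvV, hn]
    by_cases hcone : ∃ v ∈ K.verts, ∀ G ∈ K.minNonFaces, v ∉ G
    · obtain ⟨v, hvV, hv⟩ := hcone
      obtain ⟨hmem, hcard⟩ := hsub v hvV
      exact K.taylorUB_cone hvV hv hd1
        (IH (n - 1) (by omega) _ hmem hcard)
    · push_neg at hcone
      refine K.taylorUB_nocone hd1 hsize hcone ?_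
      intro v hvV
      obtain ⟨hmem, hcard⟩ := hsub v hvV
      exact IH (n - 1) (by omega) _ hmem hcard
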